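/- Let n ≥ 1 and let F be a family of subsets of [n] all of size k such that |A Δ B| ≤ d for all A, B ∈ F, where d ≤ n. Then |F| ≤ 2 · C(n, ⌊d/2⌋). -/

import Mathlib

open Finset
open scoped symmDiff

namespace UniformKleitman

variable {n : ℕ}

/-- The monomial function `S ↦ [I ⊆ S]`. -/
def mon (I : Finset (Fin n)) : Finset (Fin n) → ℚ := fun S => if I ⊆ S then 1 else 0

/-- The generating finset of monomials of degree at most `D`. -/
noncomputable def gens (n D : ℕ) : Finset (Finset (Fin n) → ℚ) :=
  ((univ : Finset (Finset (Fin n))).filter (fun I => I.card ≤ D)).image mon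

/-- Span of monomials of degree at most `D`. -/
noncomputable def P (n D : ℕ) : Submodule ℚ (Finset (Fin n) → ℚ) :=
  Submodule.span ℚ (↑(gens n D))

lemma mon_mem {I : Finset (Fin n)} {D : ℕ} (hI : I.card ≤ D) : mon I ∈ P n D :=
  Submodule.subset_span (by simp [gens]; exact ⟨I, hI, rfl⟩)

lemma mon_mul_card (I A : Finset (Fin n)) :
    (fun S => mon I S * ((A ∩ S).card : ℚ)) = ∑ i ∈ A, mon (insert i I) := by
  funext S
  rw [Finset.sum_apply]
  by_cases h : I ⊆ S
  · have h1 : ∀ i ∈ A, mon (insert i I) S = if i ∈ S then (1:ℚ) else 0 := by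
      intro i _
      simp [mon, insert_subset_iff, h]
    rw [Finset.sum_congr rfl h1, mon, if_pos h, one_mul]
    rw [← Finset.filter_mem_eq_inter, Finset.card_filter]
    push_cast
    rfl
  · have h1 : ∀ i ∈ A, mon (insert i I) S = 0 := by
      intro i _
      simp only [mon, ite_eq_right_iff]
      intro hsub
      exact absurd ((subset_insert i I).trans hsub) h
    rw [Finset.sum_congr rfl h1, mon, if_neg h, Finset.sum_const, zero_mul, smul_zero]


lemma P_mono {D D' : ℕ} (h : D ≤ D') : P n D ≤ P n D' := by
  rw [P, Submodule.span_le]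
  intro x hx
  simp only [gens, coe_image, Set.mem_image, mem_coe, mem_filter] at hx
  obtain ⟨I, ⟨-, hI⟩, rfl⟩ := hx
  exact mon_mem (hI.trans h)

lemma mul_factor_mem {D : ℕ} {g : Finset (Fin n) → ℚ} (hg : g ∈ P n D)
    (A : Finset (Fin n)) (c : ℚ) :
    (fun S => g S * (((A ∩ S).card : ℚ) - c)) ∈ P n (D + 1) := by
  classical
  set h : Finset (Fin n) → ℚ := fun S => ((A ∩ S).card : ℚ) - c with hh
  have hrw : (fun S => g S * (((A ∩ S).card : ℚ) - c)) = (LinearMap.mulLeft ℚ h) g := by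
    funext S
    simp only [LinearMap.mulLeft_apply, Pi.mul_apply, hh]
    ring
  rw [hrw]
  have hmem : (LinearMap.mulLeft ℚ h) g ∈ Submodule.map (LinearMap.mulLeft ℚ h) (P n D) :=
    ⟨g, hg, rfl⟩
  refine SetLike.le_def.mp ?_ hmem
  rw [P, Submodule.map_span, Submodule.span_le]
  rintro x ⟨f, hf, rfl⟩
  simp only [gens, coe_image, Set.mem_image, mem_coe, mem_filter] at hf
  obtain ⟨I, ⟨-, hI⟩, rfl⟩ := hf
  have key : (LinearMap.mulLeft ℚ h) (mon I)
      = (∑ i ∈ A, mon (insert i I)) - c • mon I := by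
    funext S
    have := congrFun (mon_mul_card I A) S
    simp only [LinearMap.mulLeft_apply, Pi.mul_apply, Pi.sub_apply, Pi.smul_apply,
      smul_eq_mul, hh]
    rw [← this]
    ring
  rw [key]
  exact sub_mem
    (Submodule.sum_mem _ fun i _ => mon_mem ((card_insert_le i I).trans (by omega)))
    (Submodule.smul_mem _ _ (mon_mem (hI.trans (Nat.le_succ D))))

/-- The polynomial attached to a set `A` in the RCW argument. -/
def fA (k t : ℕ) (A : Finset (Fin n)) : Finset (Fin n) → ℚ :=
  fun S => ∏ j ∈ range t, (((A ∩ S).card : ℚ) - ((k : ℚ) - t + j))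

/-- The auxiliary "swallowing" polynomials. -/
def qI (k : ℕ) (I : Finset (Fin n)) : Finset (Fin n) → ℚ :=
  fun S => mon I S * ((S.card : ℚ) - k)

lemma prod_mem (A : Finset (Fin n)) (cs : ℕ → ℚ) (t : ℕ) :
    (fun S => ∏ j ∈ range t, (((A ∩ S).card : ℚ) - cs j)) ∈ P n t := by
  induction t with
  | zero =>
      have : (fun (S : Finset (Fin n)) => ∏ j ∈ range 0, (((A ∩ S).card : ℚ) - cs j))
          = mon (∅ : Finset (Fin n)) := by
        funext S; simp [mon]
      rw [this]
      exact mon_mem (by simp)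
  | succ t ih =>
      have : (fun (S : Finset (Fin n)) => ∏ j ∈ range (t+1), (((A ∩ S).card : ℚ) - cs j))
          = fun S => (∏ j ∈ range t, (((A ∩ S).card : ℚ) - cs j)) * (((A ∩ S).card : ℚ) - cs t) := by
        funext S; rw [Finset.prod_range_succ]
      rw [this]
      exact mul_factor_mem ih A (cs t)

lemma fA_mem (k t : ℕ) (A : Finset (Fin n)) : fA k t A ∈ P n t :=
  prod_mem A (fun j => (k : ℚ) - t + j) t

lemma qI_mem {k t : ℕ} {I : Finset (Fin n)} (hI : I.card + 1 ≤ t) : qI k I ∈ P n t := by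
  have : qI k I = fun S => mon I S * (((univ ∩ S).card : ℚ) - (k : ℚ)) := by
    funext S; simp [qI]
  rw [this]
  have := mul_factor_mem (mon_mem (le_refl I.card)) (univ : Finset (Fin n)) (k : ℚ)
  exact P_mono hI this


lemma fA_self {k t : ℕ} {A : Finset (Fin n)} (hA : A.card = k) : fA k t A A ≠ 0 := by
  rw [fA]
  rw [Finset.prod_ne_zero_iff]
  intro j hj
  rw [Finset.mem_range] at hj
  rw [Finset.inter_self, hA]
  have : (j : ℚ) < t := by exact_mod_cast hj
  intro hc
  nlinarith [hc]

lemma fA_other {k t : ℕ} {A B : Finset (Fin n)} (hA : A.card = k) (hB : B.card = k)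
    (hne : A ≠ B) (hd : (A \ B).card ≤ t) : fA k t A B = 0 := by
  set m := (A \ B).card with hm
  have hm1 : 1 ≤ m := by
    rcases Nat.eq_zero_or_pos m with h0 | h
    · exfalso
      have : A ⊆ B := by
        rw [← Finset.sdiff_eq_empty_iff_subset]
        exact Finset.card_eq_zero.mp (hm.symm.trans h0)
      exact hne (Finset.eq_of_subset_of_card_le this (hB.trans hA.symm).le)
    · exact h
  have hkey : ((A ∩ B).card : ℚ) = (k : ℚ) - m := by
    have := Finset.card_inter_add_card_sdiff A B
    rw [hA] at this
    push_cast [← this]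
    ring
  rw [fA]
  apply Finset.prod_eq_zero (i := t - m)
  · rw [Finset.mem_range]
    omega
  · rw [hkey]
    have : ((t - m : ℕ) : ℚ) = (t : ℚ) - m := by
      have : m ≤ t := hd
      push_cast [Nat.cast_sub this]
      ring
    rw [this]
    ring

lemma qI_apply_card {k : ℕ} {I B : Finset (Fin n)} (hB : B.card = k) : qI k I B = 0 := by
  simp [qI, hB]

lemma qI_apply {k : ℕ} (J I : Finset (Fin n)) :
    qI k J I = if J ⊆ I then ((I.card : ℚ) - k) else 0 := by
  simp [qI, mon, ite_mul]


lemma main {n k t : ℕ} (htk : t ≤ k) (F : Finset (Finset (Fin n)))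
    (hunif : ∀ A ∈ F, A.card = k)
    (hd : ∀ A ∈ F, ∀ B ∈ F, (A \ B).card ≤ t) :
    F.card ≤ n.choose t := by
  classical
  set T' : Finset (Finset (Fin n)) := univ.filter (fun I => I.card + 1 ≤ t) with hT'
  set v : (↥F ⊕ ↥T') → (Finset (Fin n) → ℚ) :=
    Sum.elim (fun A => fA k t A.1) (fun I => qI k I.1) with hv
  have hvmem : ∀ i, v i ∈ P n t := by
    rintro (⟨A, hA⟩ | ⟨I, hI⟩)
    · exact fA_mem k t A
    · rw [hT', mem_filter] at hI
      exact qI_mem hI.2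
  have hli : LinearIndependent ℚ v := by
    rw [Fintype.linearIndependent_iff]
    intro g hg
    have hpt : ∀ S, ∑ i, g i * v i S = 0 := by
      intro S
      have h0 := congrFun hg S
      simpa [Finset.sum_apply] using h0
    have h1 : ∀ (B : ↥F), g (Sum.inl B) = 0 := by
      rintro ⟨B, hB⟩
      have h0 := hpt B
      rw [Fintype.sum_sum_type] at h0
      have hq : ∀ I : ↥T', g (Sum.inr I) * v (Sum.inr I) B = 0 := by
        intro I
        rw [hv, Sum.elim_inr, qI_apply_card (hunif B hB), mul_zero]
      rw [Finset.sum_congr rfl (fun I _ => hq I), Finset.sum_const, smul_zero, add_zero] at h0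
      have hf : ∀ A : ↥F, A ≠ ⟨B, hB⟩ → g (Sum.inl A) * v (Sum.inl A) B = 0 := by
        rintro ⟨A, hA⟩ hne
        rw [hv, Sum.elim_inl, fA_other (hunif A hA) (hunif B hB)
          (fun h => hne (by simpa using h)) (hd A hA B hB), mul_zero]
      rw [Fintype.sum_eq_single (⟨B, hB⟩ : ↥F) hf] at h0
      rw [hv] at h0
      simp only [Sum.elim_inl] at h0
      exact (mul_eq_zero.mp h0).resolve_right (fA_self (hunif B hB))
    have h2 : ∀ S, ∑ I : ↥T', g (Sum.inr I) * qI k I.1 S = 0 := by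
      intro S
      have h0 := hpt S
      rw [Fintype.sum_sum_type] at h0
      rw [Finset.sum_congr rfl (fun A _ => by rw [h1 A, zero_mul]), Finset.sum_const,
        smul_zero, zero_add] at h0
      simpa [hv] using h0
    have h3 : ∀ m (I : ↥T'), I.1.card = m → g (Sum.inr I) = 0 := by
      intro m
      induction m using Nat.strong_induction_on with
      | _ m ih =>
        rintro I hIm
        have h0 := h2 I.1
        have hsingle : ∀ J : ↥T', J ≠ I → g (Sum.inr J) * qI k J.1 I.1 = 0 := by
          intro J hJ
          rw [qI_apply]
          by_cases hsub : J.1 ⊆ I.1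
          · have hlt : J.1.card < m := by
              rw [← hIm]
              exact Finset.card_lt_card (lt_of_le_of_ne hsub (fun h => hJ (Subtype.ext h)))
            rw [ih _ hlt J rfl, zero_mul]
          · rw [if_neg hsub, mul_zero]
        rw [Fintype.sum_eq_single I hsingle, qI_apply, if_pos (subset_refl _)] at h0
        have hne : ((I.1.card : ℚ) - k) ≠ 0 := by
          have hIt : I.1.card + 1 ≤ t := by
            have h5 := I.2
            simp only [hT', mem_filter] at h5
            exact h5.2
          have : (I.1.card : ℚ) < k := by exact_mod_cast (by omega : I.1.card < k)
          intro hc; nlinarith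
        exact (mul_eq_zero.mp h0).resolve_right hne
    rintro (B | I)
    · exact h1 B
    · exact h3 _ I rfl
  -- dimension count
  haveI : FiniteDimensional ℚ (P n t) :=
    FiniteDimensional.span_of_finite ℚ (gens n t).finite_toSet
  set v' : (↥F ⊕ ↥T') → (P n t) := fun i => ⟨v i, hvmem i⟩ with hv'
  have hli' : LinearIndependent ℚ v' := by
    apply LinearIndependent.of_comp (P n t).subtype
    convert hli
    funext i; rfl
  have hcard1 : Fintype.card (↥F ⊕ ↥T') ≤ Module.finrank ℚ (P n t) :=
    hli'.fintype_card_le_finrank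
  have hcard2 : Module.finrank ℚ (P n t) ≤ (gens n t).card :=
    finrank_span_finset_le_card (gens n t)
  have hcard3 : (gens n t).card ≤ ((univ : Finset (Finset (Fin n))).filter
      (fun I => I.card ≤ t)).card := Finset.card_image_le
  have hcard4 : ((univ : Finset (Finset (Fin n))).filter (fun I => I.card ≤ t)).card
      ≤ T'.card + n.choose t := by
    have hsub : (univ : Finset (Finset (Fin n))).filter (fun I => I.card ≤ t)
        ⊆ T' ∪ powersetCard t univ := by
      intro I hI
      rw [mem_filter] at hI
      simp only [Finset.mem_union, hT', mem_filter, mem_powersetCard_univ,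
        Finset.mem_univ, true_and]
      omega
    calc ((univ : Finset (Finset (Fin n))).filter (fun I => I.card ≤ t)).card
        ≤ (T' ∪ powersetCard t univ).card := Finset.card_le_card hsub
      _ ≤ T'.card + (powersetCard t (univ : Finset (Fin n))).card := Finset.card_union_le _ _
      _ = T'.card + n.choose t := by
          rw [Finset.card_powersetCard, Finset.card_univ, Fintype.card_fin]
  have hcard0 : Fintype.card (↥F ⊕ ↥T') = F.card + T'.card := by
    simp [Fintype.card_sum]
  have hfinal : F.card + T'.card ≤ T'.card + n.choose t := by
    calc F.card + T'.card = Fintype.card (↥F ⊕ ↥T') := hcard0.symm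
      _ ≤ Module.finrank ℚ (P n t) := hcard1
      _ ≤ (gens n t).card := hcard2
      _ ≤ _ := hcard3
      _ ≤ T'.card + n.choose t := hcard4
  omega


lemma choose_mono_left {n a b : ℕ} (hab : a ≤ b) (hb : b ≤ n / 2) :
    n.choose a ≤ n.choose b := by
  induction b with
  | zero => simp [Nat.le_zero.mp hab]
  | succ b ih =>
    rcases Nat.eq_or_lt_of_le hab with h | h
    · rw [h]
    · exact le_trans (ih (Nat.lt_succ_iff.mp h) (le_trans (Nat.le_succ b) hb))
        (Nat.choose_le_succ_of_lt_half_left hb)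

end UniformKleitman

theorem uniform_kleitman {n d k : ℕ} (hn : 1 ≤ n) (hdn : d ≤ n)
    (F : Finset (Finset (Fin n))) (hunif : ∀ A ∈ F, A.card = k)
    (hdiam : ∀ A ∈ F, ∀ B ∈ F, (A ∆ B).card ≤ d) :
    F.card ≤ 2 * n.choose (d / 2) := by
  classical
  set t := d / 2 with ht
  have hd : ∀ A ∈ F, ∀ B ∈ F, (A \ B).card ≤ t := by
    intro A hA B hB
    have hsd : (A ∆ B).card = (A \ B).card + (B \ A).card := by
      rw [symmDiff_def]
      exact Finset.card_union_of_disjoint disjoint_sdiff_sdiff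
    have heq : (A \ B).card = (B \ A).card := by
      have e1 := Finset.card_inter_add_card_sdiff A B
      have e2 := Finset.card_inter_add_card_sdiff B A
      rw [hunif A hA] at e1
      rw [hunif B hB, Finset.inter_comm] at e2
      omega
    have := hdiam A hA B hB
    omega
  by_cases htk : t ≤ k
  · have hmain := UniformKleitman.main htk F hunif hd
    omega
  · push_neg at htk
    have hsub : F ⊆ powersetCard k univ := fun A hA =>
      mem_powersetCard_univ.mpr (hunif A hA)
    have h1 : F.card ≤ n.choose k := by
      refine (Finset.card_le_card hsub).trans_eq ?_
      rw [Finset.card_powersetCard, Finset.card_univ, Fintype.card_fin]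
    have h2 : n.choose k ≤ n.choose t :=
      UniformKleitman.choose_mono_left (le_of_lt htk) (by omega)
    omega
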